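/- arXiv:2512.09034 — 7 statements merged into one kernel-verified Lean document; each statement's English description precedes it below -/
import Mathlib

section
/- For natural numbers N, k with k < N, the function s ↦ A(N,k,s) := 2^(N-k) * C(k,s) / sqrt(C(N,s) * C(N,k-s)) is monotone increasing on s ∈ {0,...,⌊k/2⌋}: if 2(s+1) ≤ k then A(N,k,s) ≤ A(N,k,s+1). -/
/-- A(N,k,s) = 2^(N-k) * C(k,s) / sqrt(C(N,s) * C(N,k-s)) -/
noncomputable def A (N k s : ℕ) : ℝ :=
  2 ^ (N - k) * (Nat.choose k s : ℝ) /
    Real.sqrt ((Nat.choose N s : ℝ) * (Nat.choose N (k - s) : ℝ))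

lemma core_ineq (N k s : ℕ) (h : k < N) (hs : 2 * (s + 1) ≤ k) :
    (N - s) * (s + 1) ≤ (k - s) * (N - k + s + 1) := by
  obtain ⟨d, hd⟩ : ∃ d, k = 2 * s + 2 + d := ⟨k - (2 * s + 2), by omega⟩
  obtain ⟨e, he⟩ : ∃ e, N = k + 1 + e := ⟨N - (k + 1), by omega⟩
  have h1 : N - s = s + 3 + d + e := by omega
  have h2 : k - s = s + 2 + d := by omega
  have h3 : N - k + s + 1 = s + 2 + e := by omega
  rw [h1, h2, h3]
  nlinarith [sq_nonneg (d + e)]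

lemma key_nat (N k s : ℕ) (h : k < N) (hs : 2 * (s + 1) ≤ k) :
    k.choose s ^ 2 * (N.choose (s + 1) * N.choose (k - (s + 1)))
      ≤ k.choose (s + 1) ^ 2 * (N.choose s * N.choose (k - s)) := by
  have hpos : 0 < (s + 1) ^ 2 * (k - s) := by
    have : 0 < k - s := by omega
    positivity
  apply Nat.le_of_mul_le_mul_right _ hpos
  have h1 : k.choose (s + 1) * (s + 1) = k.choose s * (k - s) :=
    Nat.choose_succ_right_eq k s
  have h2 : N.choose (s + 1) * (s + 1) = N.choose s * (N - s) :=
    Nat.choose_succ_right_eq N s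
  have h3 : N.choose (k - s) * (k - s) = N.choose (k - (s + 1)) * (N - (k - (s + 1))) := by
    have hk : k - s = (k - (s + 1)) + 1 := by omega
    rw [hk, Nat.choose_succ_right_eq]
  have h4 : N - (k - (s + 1)) = N - k + s + 1 := by omega
  rw [h4] at h3
  calc k.choose s ^ 2 * (N.choose (s + 1) * N.choose (k - (s + 1))) * ((s + 1) ^ 2 * (k - s))
      = k.choose s ^ 2 * (N.choose (s + 1) * (s + 1)) * N.choose (k - (s + 1))
          * ((s + 1) * (k - s)) := by ring
    _ = k.choose s ^ 2 * (N.choose s * (N - s)) * N.choose (k - (s + 1))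
          * ((s + 1) * (k - s)) := by rw [h2]
    _ = (k.choose s ^ 2 * N.choose s * N.choose (k - (s + 1)) * (k - s))
          * ((N - s) * (s + 1)) := by ring
    _ ≤ (k.choose s ^ 2 * N.choose s * N.choose (k - (s + 1)) * (k - s))
          * ((k - s) * (N - k + s + 1)) :=
        Nat.mul_le_mul_left _ (core_ineq N k s h hs)
    _ = (k.choose s * (k - s)) ^ 2 * (N.choose s
          * (N.choose (k - (s + 1)) * (N - k + s + 1))) := by ring
    _ = (k.choose (s + 1) * (s + 1)) ^ 2 * (N.choose s
          * (N.choose (k - s) * (k - s))) := by rw [h1, h3]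
    _ = k.choose (s + 1) ^ 2 * (N.choose s * N.choose (k - s)) * ((s + 1) ^ 2 * (k - s)) := by
        ring

theorem stmt2 (N k s : ℕ) (h0 : 0 < k) (h : k < N) (hs : 2 * (s + 1) ≤ k) :
    A N k s ≤ A N k (s + 1) := by
  have hsk : s + 1 ≤ k := by omega
  have hb : (0 : ℝ) < (N.choose s : ℝ) := by
    exact_mod_cast Nat.choose_pos (by omega : s ≤ N)
  have hb' : (0 : ℝ) < (N.choose (s + 1) : ℝ) := by
    exact_mod_cast Nat.choose_pos (by omega : s + 1 ≤ N)
  have hg : (0 : ℝ) < (N.choose (k - s) : ℝ) := by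
    exact_mod_cast Nat.choose_pos (by omega : k - s ≤ N)
  have hg' : (0 : ℝ) < (N.choose (k - (s + 1)) : ℝ) := by
    exact_mod_cast Nat.choose_pos (by omega : k - (s + 1) ≤ N)
  have hu : (0 : ℝ) < (N.choose s : ℝ) * (N.choose (k - s) : ℝ) := by positivity
  have hu' : (0 : ℝ) < (N.choose (s + 1) : ℝ) * (N.choose (k - (s + 1)) : ℝ) := by positivity
  unfold A
  rw [div_le_div_iff₀ (Real.sqrt_pos.2 hu) (Real.sqrt_pos.2 hu')]
  have key : ((k.choose s : ℝ)) ^ 2 * ((N.choose (s + 1) : ℝ) * (N.choose (k - (s + 1)) : ℝ))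
      ≤ ((k.choose (s + 1) : ℝ)) ^ 2 * ((N.choose s : ℝ) * (N.choose (k - s) : ℝ)) := by
    exact_mod_cast key_nat N k s h hs
  have hmul : ∀ (x u : ℝ), 0 ≤ x → 0 ≤ u → x * Real.sqrt u = Real.sqrt (x ^ 2 * u) := by
    intro x u hx hux
    rw [Real.sqrt_mul (by positivity), Real.sqrt_sq hx]
  calc 2 ^ (N - k) * (k.choose s : ℝ)
        * Real.sqrt ((N.choose (s + 1) : ℝ) * (N.choose (k - (s + 1)) : ℝ))
      = 2 ^ (N - k) * ((k.choose s : ℝ)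
          * Real.sqrt ((N.choose (s + 1) : ℝ) * (N.choose (k - (s + 1)) : ℝ))) := by ring
    _ = 2 ^ (N - k) * Real.sqrt ((k.choose s : ℝ) ^ 2
          * ((N.choose (s + 1) : ℝ) * (N.choose (k - (s + 1)) : ℝ))) := by
        rw [hmul _ _ (by positivity) (le_of_lt hu')]
    _ ≤ 2 ^ (N - k) * Real.sqrt ((k.choose (s + 1) : ℝ) ^ 2
          * ((N.choose s : ℝ) * (N.choose (k - s) : ℝ))) := by
        exact mul_le_mul_of_nonneg_left (Real.sqrt_le_sqrt key) (by positivity)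
    _ = 2 ^ (N - k) * ((k.choose (s + 1) : ℝ)
          * Real.sqrt ((N.choose s : ℝ) * (N.choose (k - s) : ℝ))) := by
        rw [hmul _ _ (by positivity) (le_of_lt hu)]
    _ = 2 ^ (N - k) * (k.choose (s + 1) : ℝ)
          * Real.sqrt ((N.choose s : ℝ) * (N.choose (k - s) : ℝ)) := by ring
end

section
/- For natural numbers N, k with 0 < k < N, the maximum over s ∈ {0,...,k} of A(N,k,s) := 2^(N-k) * C(k,s) / sqrt(C(N,s) * C(N,k-s)) is attained at s = ⌊k/2⌋ (and also at s = ⌈k/2⌉). -/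
lemma A_symm (N k s : ℕ) (hs : s ≤ k) : A N k s = A N k (k - s) := by
  unfold A
  rw [Nat.choose_symm hs, Nat.sub_sub_self hs, mul_comm ((N.choose (k-s) : ℝ))]

lemma nat_key (N k s : ℕ) (hs : 2*(s+1) ≤ k) (hk : k < N) :
    (k.choose s)^2 * (N.choose (s+1)) * (N.choose (k-s-1)) ≤
      (k.choose (s+1))^2 * (N.choose s) * (N.choose (k-s)) := by
  have h1 : k.choose (s+1) * (s+1) = k.choose s * (k - s) := Nat.choose_succ_right_eq k s
  have h2 : N.choose (s+1) * (s+1) = N.choose s * (N - s) := Nat.choose_succ_right_eq N s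
  have h3' : N.choose (k-s-1+1) * (k-s-1+1) = N.choose (k-s-1) * (N - (k-s-1)) :=
    Nat.choose_succ_right_eq N (k-s-1)
  have he : k - s - 1 + 1 = k - s := by omega
  rw [he] at h3'
  have core : (N-s)*(s+1) ≤ (k-s)*(N-(k-s-1)) := by
    obtain ⟨p, hp⟩ : ∃ p, k = s + 2 + p := ⟨k - s - 2, by omega⟩
    obtain ⟨q, hq⟩ : ∃ q, N = k + 1 + q := ⟨N - k - 1, by omega⟩
    subst hq; subst hp
    have e1 : s + 2 + p + 1 + q - s = p + q + 3 := by omega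
    have e2 : s + 2 + p - s = p + 2 := by omega
    rw [e1, e2]
    have e3 : s + 2 + p + 1 + q - (p + 2 - 1) = s + q + 2 := by omega
    rw [e3]
    nlinarith [Nat.zero_le p, Nat.zero_le q, hs]
  have hF : 0 < (s+1)*((s+1)*((s+1)*(N-(k-s-1)))) := by
    have : 0 < N - (k-s-1) := by omega
    positivity
  refine Nat.le_of_mul_le_mul_right ?_ hF
  calc (k.choose s)^2 * (N.choose (s+1)) * (N.choose (k-s-1)) *
        ((s+1)*((s+1)*((s+1)*(N-(k-s-1)))))
      = (k.choose s) * (k.choose s) * ((N.choose (s+1)) * (s+1)) *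
          ((N.choose (k-s-1)) * (N-(k-s-1))) * ((s+1)*(s+1)) := by ring
    _ = (k.choose s) * (k.choose s) * ((N.choose s) * (N - s)) *
          ((N.choose (k-s)) * (k-s)) * ((s+1)*(s+1)) := by rw [h2, h3']
    _ = (k.choose s) * (k.choose s) * (N.choose s) * (N.choose (k-s)) *
          ((k-s)*(s+1)) * ((N-s)*(s+1)) := by ring
    _ ≤ (k.choose s) * (k.choose s) * (N.choose s) * (N.choose (k-s)) *
          ((k-s)*(s+1)) * ((k-s)*(N-(k-s-1))) := by
        exact Nat.mul_le_mul_left _ core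
    _ = (k.choose s * (k-s)) * (k.choose s * (k-s)) * (N.choose s) * (N.choose (k-s)) *
          ((s+1)*(N-(k-s-1))) := by ring
    _ = (k.choose (s+1) * (s+1)) * (k.choose (s+1) * (s+1)) * (N.choose s) * (N.choose (k-s)) *
          ((s+1)*(N-(k-s-1))) := by rw [h1]
    _ = (k.choose (s+1))^2 * (N.choose s) * (N.choose (k-s)) *
          ((s+1)*((s+1)*((s+1)*(N-(k-s-1))))) := by ring

lemma A_step (N k s : ℕ) (hs : 2*(s+1) ≤ k) (hk : k < N) : A N k s ≤ A N k (s+1) := by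
  have hsN : s ≤ N := by omega
  have hs1N : s + 1 ≤ N := by omega
  have hksN : k - s ≤ N := by omega
  have hks1N : k - s - 1 ≤ N := by omega
  have hb : (0:ℝ) < N.choose s := by exact_mod_cast Nat.choose_pos hsN
  have hb' : (0:ℝ) < N.choose (s+1) := by exact_mod_cast Nat.choose_pos hs1N
  have hc : (0:ℝ) < N.choose (k-s) := by exact_mod_cast Nat.choose_pos hksN
  have hc' : (0:ℝ) < N.choose (k-s-1) := by exact_mod_cast Nat.choose_pos hks1N
  have he : k - (s+1) = k - s - 1 := by omega
  unfold A
  rw [he]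
  rw [div_le_div_iff₀ (Real.sqrt_pos.mpr (by positivity)) (Real.sqrt_pos.mpr (by positivity))]
  have hL : (0:ℝ) ≤ 2 ^ (N - k) * (k.choose s : ℝ) *
      Real.sqrt ((N.choose (s+1) : ℝ) * (N.choose (k-s-1) : ℝ)) := by positivity
  have hR : (0:ℝ) ≤ 2 ^ (N - k) * (k.choose (s+1) : ℝ) *
      Real.sqrt ((N.choose s : ℝ) * (N.choose (k-s) : ℝ)) := by positivity
  rw [← Real.sqrt_sq hL, ← Real.sqrt_sq hR]
  apply Real.sqrt_le_sqrt
  rw [mul_pow, mul_pow, mul_pow, mul_pow,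
    Real.sq_sqrt (by positivity), Real.sq_sqrt (by positivity)]
  have hnat := nat_key N k s hs hk
  have hcast : ((k.choose s : ℝ))^2 * (N.choose (s+1) : ℝ) * (N.choose (k-s-1) : ℝ) ≤
      ((k.choose (s+1) : ℝ))^2 * (N.choose s : ℝ) * (N.choose (k-s) : ℝ) := by
    exact_mod_cast hnat
  nlinarith [pow_pos (show (0:ℝ) < 2 by norm_num) (N-k), hcast,
    sq_nonneg ((2:ℝ)^(N-k))]

lemma A_upto (N k : ℕ) (hk : k < N) : ∀ t, 2*t ≤ k → ∀ s ≤ t, A N k s ≤ A N k t := by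
  intro t
  induction t with
  | zero => intro _ s hs; interval_cases s; exact le_refl _
  | succ t ih =>
    intro ht s hs
    rcases Nat.eq_or_lt_of_le hs with rfl | hlt
    · exact le_refl _
    · exact le_trans (ih (by omega) s (by omega)) (A_step N k t (by omega) hk)

/-- The maximum of `A N k ·` on `{0,…,k}` is attained at `⌊k/2⌋` and also at `⌈k/2⌉`. -/
theorem stmt4 (N k : ℕ) (h0 : 0 < k) (h : k < N) :
    (∀ s ≤ k, A N k s ≤ A N k (k / 2)) ∧ A N k (k / 2) = A N k ((k + 1) / 2) := by
  constructor
  · intro s hs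
    by_cases hhalf : s ≤ k / 2
    · exact A_upto N k h (k/2) (by omega) s hhalf
    · rw [A_symm N k s hs]
      exact A_upto N k h (k/2) (by omega) (k - s) (by omega)
  · have : (k + 1) / 2 = k - k / 2 := by omega
    rw [this]
    exact A_symm N k (k/2) (by omega)
end

section
/- For even k ≥ 2, the maximal violation factor V(N,k) := A(N,k,k/2)/(2·2^((N-k-1)/2)) is strictly increasing in N whenever N > (2+√2)·k/2 − 1, and V(N,k) → ∞ as N → ∞ for fixed k. -/
/-- V(N,k) = A(N,k,k/2) · 2^(−(N−k+1)/2), the maximal MABK violation factor. -/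
noncomputable def V (N k : ℕ) : ℝ :=
  A N k (k / 2) * (2 : ℝ) ^ (-(((N : ℝ) - k + 1) / 2))

private lemma V_formula (N k s : ℕ) (hs : k = 2 * s) :
    V N k = 2 ^ (N - k) * (Nat.choose k s : ℝ) / (Nat.choose N s : ℝ) *
      (2 : ℝ) ^ (-(((N : ℝ) - k + 1) / 2)) := by
  have h1 : k / 2 = s := by omega
  have h2 : k - s = s := by omega
  unfold V A
  rw [h1, h2, Real.sqrt_mul_self (by positivity)]

private lemma V_pos (N k s : ℕ) (hs : k = 2 * s) (hN : s ≤ N) : 0 < V N k := by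
  rw [V_formula N k s hs]
  have h1 : 0 < (Nat.choose N s : ℝ) := by exact_mod_cast Nat.choose_pos hN
  have h2 : 0 < (Nat.choose k s : ℝ) := by
    exact_mod_cast Nat.choose_pos (by omega : s ≤ k)
  positivity

private lemma V_ratio (N k s : ℕ) (hs : k = 2 * s) (hN : k ≤ N) :
    V (N + 1) k = Real.sqrt 2 * (((N : ℝ) + 1 - s) / ((N : ℝ) + 1)) * V N k := by
  have hsN : s ≤ N := by omega
  have hC : (0 : ℝ) < Nat.choose N s := by exact_mod_cast Nat.choose_pos hsN
  have hC1 : (0 : ℝ) < Nat.choose (N + 1) s := by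
    exact_mod_cast Nat.choose_pos (by omega : s ≤ N + 1)
  rw [V_formula (N + 1) k s hs, V_formula N k s hs]
  have hpow : N + 1 - k = (N - k) + 1 := by omega
  have key : ((Nat.choose N s : ℝ)) * ((N : ℝ) + 1) =
      (Nat.choose (N + 1) s : ℝ) * ((N : ℝ) + 1 - s) := by
    have h := Nat.choose_mul_succ_eq N s
    have h' : (Nat.choose N s : ℝ) * ((N : ℝ) + 1) =
        (Nat.choose (N + 1) s : ℝ) * ((N + 1 - s : ℕ) : ℝ) := by exact_mod_cast h
    rw [h', Nat.cast_sub (by omega)]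
    push_cast
    ring
  have hrp : (2 : ℝ) ^ (-(((N : ℝ) + 1 - k + 1) / 2)) =
      (2 : ℝ) ^ (-(((N : ℝ) - k + 1) / 2)) * (2 : ℝ) ^ ((-1 : ℝ) / 2) := by
    rw [← Real.rpow_add two_pos]
    ring_nf
  have hsqrt : 2 * (2 : ℝ) ^ ((-1 : ℝ) / 2) = Real.sqrt 2 := by
    rw [Real.sqrt_eq_rpow, show (1/2 : ℝ) = 1 + (-1)/2 by norm_num,
      Real.rpow_add two_pos, Real.rpow_one]
  have hNc : ((N + 1 : ℕ) : ℝ) = (N : ℝ) + 1 := by push_cast; ring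
  rw [hNc, hrp, hpow, pow_succ]
  have hx : (0 : ℝ) < (N : ℝ) + 1 := by positivity
  rw [← hsqrt]
  generalize (2 : ℝ) ^ ((-1 : ℝ) / 2) = a at *
  generalize (2 : ℝ) ^ (-(((N : ℝ) - k + 1) / 2)) = b at *
  generalize (2 : ℝ) ^ (N - k) = P at *
  field_simp
  linear_combination (P * (Nat.choose k s : ℝ) * b * a) * key

theorem stmt9 (k : ℕ) (hk : 2 ≤ k) (hke : Even k) :
    (∀ N : ℕ, (2 + Real.sqrt 2) * k / 2 - 1 < (N : ℝ) → V N k < V (N + 1) k) ∧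
    Filter.Tendsto (fun N : ℕ => V N k) Filter.atTop Filter.atTop := by
  obtain ⟨s, hs⟩ := hke
  have hs : k = 2 * s := by omega
  have hsqrt2 : Real.sqrt 2 ^ 2 = 2 := Real.sq_sqrt (by norm_num)
  have hsqrt_pos : (0 : ℝ) < Real.sqrt 2 := Real.sqrt_pos.mpr (by norm_num)
  have hsqrt_gt : (1.41 : ℝ) < Real.sqrt 2 := by nlinarith
  constructor
  · intro N hN
    have hks : (k : ℝ) = 2 * s := by exact_mod_cast hs
    have hNk : k ≤ N := by
      have : (k : ℝ) - 1 < N := by nlinarith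
      have : (k : ℝ) < (N : ℝ) + 1 := by linarith
      exact_mod_cast Nat.lt_succ_iff.mp (by exact_mod_cast this)
    rw [V_ratio N k s hs hNk]
    have hV : 0 < V N k := V_pos N k s hs (by omega)
    have hx : (0 : ℝ) < (N : ℝ) + 1 := by positivity
    have hfac : 1 < Real.sqrt 2 * (((N : ℝ) + 1 - s) / ((N : ℝ) + 1)) := by
      rw [mul_div_assoc', lt_div_iff₀ hx, one_mul]
      nlinarith
    nlinarith [mul_lt_mul_of_pos_right hfac hV]
  · have hstep : ∀ N, 2 * k ≤ N → (21 / 20 : ℝ) * V N k ≤ V (N + 1) k := by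
      intro N hN
      rw [V_ratio N k s hs (by omega)]
      have hV : 0 < V N k := V_pos N k s hs (by omega)
      have hx : (0 : ℝ) < (N : ℝ) + 1 := by positivity
      have hN4 : (4 * s : ℝ) ≤ N := by exact_mod_cast (by omega : 4 * s ≤ N)
      have hs1 : (1 : ℝ) ≤ s := by exact_mod_cast (by omega : 1 ≤ s)
      have hfac : (21 / 20 : ℝ) ≤ Real.sqrt 2 * (((N : ℝ) + 1 - s) / ((N : ℝ) + 1)) := by
        rw [mul_div_assoc', le_div_iff₀ hx]
        nlinarith
      nlinarith [mul_le_mul_of_nonneg_right hfac hV.le]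
    have hV0 : 0 < V (2 * k) k := V_pos (2 * k) k s hs (by omega)
    have hgeom : ∀ n, V (2 * k) k * (21 / 20 : ℝ) ^ n ≤ V (2 * k + n) k := by
      intro n
      induction n with
      | zero => simp
      | succ n ih =>
        have h1 := hstep (2 * k + n) (by omega)
        calc V (2 * k) k * (21 / 20 : ℝ) ^ (n + 1)
            = (21 / 20 : ℝ) * (V (2 * k) k * (21 / 20 : ℝ) ^ n) := by ring
          _ ≤ (21 / 20 : ℝ) * V (2 * k + n) k := by nlinarith
          _ ≤ V (2 * k + n + 1) k := h1
    refine Filter.tendsto_atTop_mono' Filter.atTop ?_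
      (((tendsto_pow_atTop_atTop_of_one_lt (by norm_num : (1 : ℝ) < 21 / 20)).comp
        (Filter.tendsto_sub_atTop_nat (2 * k))).const_mul_atTop hV0)
    filter_upwards [Filter.eventually_ge_atTop (2 * k)] with N hNge
    have := hgeom (N - 2 * k)
    rwa [Nat.add_sub_cancel' hNge] at this
end

section
/- For every positive integer k there exists N such that the violation factor A(N,k,⌊k/2⌋)/(2·2^((N-k-1)/2)) > 1, i.e., the maximal quantum value of the (N−k)-party MABK expectation on a permutation-invariant N-qubit state exceeds the local bound. -/
lemma aux_key : ∀ k : ℕ, k * (k + 5) + 1 < 2 ^ (k + 4) := by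
  intro k
  induction k with
  | zero => norm_num
  | succ k ih =>
    have h1 : k + 4 ≤ 2 ^ (k + 3) := by
      have := Nat.lt_two_pow_self (n := k + 3); omega
    have h2 : 2 * (k + 3) + (k * (k + 5) + 1) ≥ (k + 1) * (k + 1 + 5) + 1 := by ring_nf; omega
    have h3 : 2 * (k + 3) ≤ 2 ^ (k + 4) := by
      calc 2 * (k + 3) ≤ 2 * 2 ^ (k + 3) := by
            have := Nat.lt_two_pow_self (n := k + 3); omega
        _ = 2 ^ (k + 4) := by ring
    calc (k + 1) * (k + 1 + 5) + 1 ≤ 2 * (k + 3) + (k * (k + 5) + 1) := h2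
      _ < 2 ^ (k + 4) + 2 ^ (k + 4) := by omega
      _ = 2 ^ (k + 4 + 1) := by ring

theorem stmt10 (k : ℕ) (hk : 1 ≤ k) :
    ∃ N : ℕ, 2 * k < N ∧
      (1 / 2) * A N k (k / 2) > (2 : ℝ) ^ (((N : ℝ) - k - 1) / 2) := by
  set m := k + 4 with hm
  refine ⟨2 ^ m, ?_, ?_⟩
  case _ =>
    have h1 : k + 1 ≤ 2 ^ k := by have := Nat.lt_two_pow_self (n := k); omega
    have h2 : 2 ^ (k + 1) ≤ 2 ^ m := Nat.pow_le_pow_right (by norm_num) (by omega)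
    have h3 : 2 ^ (k + 1) = 2 * 2 ^ k := by ring
    omega
  set N := 2 ^ m with hN
  have hNk : 2 * k < N := by
    have h1 : k + 1 ≤ 2 ^ k := by have := Nat.lt_two_pow_self (n := k); omega
    have h2 : 2 ^ (k + 1) ≤ 2 ^ m := Nat.pow_le_pow_right (by norm_num) (by omega)
    have h3 : 2 ^ (k + 1) = 2 * 2 ^ k := by ring
    simp only [hN]; omega
  -- key nat inequality: N^k < 2^(N-k-1)
  have hkey : m * k + k + 1 < N := by
    have := aux_key k
    calc m * k + k + 1 = k * (k + 5) + 1 := by rw [hm]; ring_nf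
      _ < 2 ^ (k + 4) := this
      _ = N := rfl
  have hNe : N ^ k < 2 ^ (N - k - 1) := by
    calc N ^ k = 2 ^ (m * k) := by rw [hN, ← pow_mul]
      _ < 2 ^ (N - k - 1) := Nat.pow_lt_pow_right (by norm_num) (by omega)
  set s := k / 2 with hs
  set e := N - k - 1 with he
  have hsk : s ≤ k := Nat.div_le_self k 2
  -- positivity of binomials
  have hc1 : 0 < Nat.choose N s := Nat.choose_pos (by omega)
  have hc2 : 0 < Nat.choose N (k - s) := Nat.choose_pos (by omega)
  have hPnat : Nat.choose N s * Nat.choose N (k - s) ≤ N ^ k := by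
    calc Nat.choose N s * Nat.choose N (k - s) ≤ N ^ s * N ^ (k - s) :=
          Nat.mul_le_mul (Nat.choose_le_pow _ _) (Nat.choose_le_pow _ _)
      _ = N ^ k := by rw [← pow_add]; congr 1; omega
  set P : ℝ := (Nat.choose N s : ℝ) * (Nat.choose N (k - s) : ℝ) with hP
  have hPpos : 0 < P := by positivity
  have hPlt : P < 2 ^ e := by
    have : (Nat.choose N s * Nat.choose N (k - s) : ℕ) < 2 ^ e := lt_of_le_of_lt hPnat hNe
    calc P = ((Nat.choose N s * Nat.choose N (k - s) : ℕ) : ℝ) := by push_cast [hP]; ring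
      _ < ((2 ^ e : ℕ) : ℝ) := by exact_mod_cast this
      _ = 2 ^ e := by push_cast; ring
  have hC : (1 : ℝ) ≤ (Nat.choose k s : ℝ) := by
    exact_mod_cast Nat.choose_pos hsk
  -- rewrite RHS as sqrt (2^e)
  have hcast : ((N : ℝ) - k - 1) = (e : ℝ) := by
    rw [he, Nat.sub_sub, Nat.cast_sub (by omega : k + 1 ≤ N)]
    push_cast; ring
  have hsqpow : ∀ n : ℕ, Real.sqrt 2 ^ n = Real.sqrt (2 ^ n) := by
    intro n
    induction n with
    | zero => simp
    | succ n ih => rw [pow_succ, pow_succ, ih, ← Real.sqrt_mul (by positivity)]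
  have hRHS : (2 : ℝ) ^ (((N : ℝ) - k - 1) / 2) = Real.sqrt (2 ^ e) := by
    rw [hcast, Real.rpow_div_two_eq_sqrt _ (by norm_num : (0:ℝ) ≤ 2),
      Real.rpow_natCast, hsqpow]
  rw [hRHS]
  -- unfold A
  have hA : A N k s = 2 ^ e * 2 * (Nat.choose k s : ℝ) / Real.sqrt P := by
    rw [A, hP]
    congr 2
    have : N - k = e + 1 := by omega
    rw [this, pow_succ]
  rw [gt_iff_lt, hA]
  have h2e : (0 : ℝ) < 2 ^ e := by positivity
  have hsqrtP : 0 < Real.sqrt P := Real.sqrt_pos.mpr hPpos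
  rw [mul_div_assoc, ← mul_assoc]
  have h12 : (1 / 2 : ℝ) * (2 ^ e * 2) = 2 ^ e := by ring
  rw [h12, ← mul_div_assoc, lt_div_iff₀ hsqrtP, ← Real.sqrt_mul (by positivity) P,
    Real.sqrt_lt' (by positivity)]
  calc 2 ^ e * P < 2 ^ e * 2 ^ e := by
        exact (mul_lt_mul_iff_right₀ h2e).mpr hPlt
    _ ≤ (2 ^ e * (Nat.choose k s : ℝ)) ^ 2 := by
        rw [mul_pow]
        have h1 : (2 : ℝ) ^ e * 2 ^ e = (2 ^ e) ^ 2 * 1 := by ring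
        rw [h1]
        apply mul_le_mul_of_nonneg_left _ (by positivity)
        nlinarith [hC]
end

section
/- The interval ( N/2^((N−1)/2), 1/2 + 2^(−N/2)·√(2^(N−2) − N) ) is nonempty for all natural N ≥ 7, and empty for N ≤ 6; hence 2-hyper-polygamy of the state family is possible exactly when N ≥ 7. -/
lemma key13 (N : ℕ) :
    ((N : ℝ) / (2 : ℝ) ^ (((N : ℝ) - 1) / 2) <
      1 / 2 + (2 : ℝ) ^ (-(N : ℝ) / 2) * Real.sqrt ((2 : ℝ) ^ ((N : ℝ) - 2) - N)) ↔
    (N : ℝ) * Real.sqrt 2 <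
      (2:ℝ) ^ ((N:ℝ)/2) / 2 + Real.sqrt (((2:ℝ) ^ ((N:ℝ)/2))^2 / 4 - N) := by
  set t : ℝ := (2:ℝ) ^ ((N:ℝ)/2) with ht
  have htpos : 0 < t := Real.rpow_pos_of_pos (by norm_num) _
  have hs2 : (2:ℝ) ^ ((1:ℝ)/2) = Real.sqrt 2 := by rw [Real.sqrt_eq_rpow]
  have h1 : (2 : ℝ) ^ (((N : ℝ) - 1) / 2) = t / Real.sqrt 2 := by
    rw [ht, ← hs2, ← Real.rpow_sub (by norm_num)]
    ring_nf
  have h2 : (2 : ℝ) ^ (-(N : ℝ) / 2) = t⁻¹ := by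
    rw [ht, ← Real.rpow_neg (by norm_num)]
    ring_nf
  have h3 : (2 : ℝ) ^ ((N : ℝ) - 2) = t^2 / 4 := by
    rw [ht, ← Real.rpow_natCast ((2:ℝ)^((N:ℝ)/2)) 2, ← Real.rpow_mul (by norm_num)]
    rw [Real.rpow_sub (by norm_num)]
    norm_num
  rw [h1, h2, h3]
  have hsq2 : (0:ℝ) < Real.sqrt 2 := Real.sqrt_pos.mpr (by norm_num)
  rw [div_div_eq_mul_div, div_lt_iff₀ htpos]
  constructor <;> intro hlt
  · calc (N:ℝ) * Real.sqrt 2 < (1/2 + t⁻¹ * Real.sqrt (t^2/4 - N)) * t := hlt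
      _ = t/2 + Real.sqrt (t^2/4 - N) := by field_simp
  · calc (N:ℝ) * Real.sqrt 2 < t/2 + Real.sqrt (t^2/4 - N) := hlt
      _ = (1/2 + t⁻¹ * Real.sqrt (t^2/4 - N)) * t := by field_simp

lemma nat_pow13 (n : ℕ) (hn : 10 ≤ n) : 8 * n ^ 2 < 2 ^ n := by
  induction n with
  | zero => omega
  | succ m ih =>
    rcases Nat.lt_or_ge m 10 with hm | hm
    · have : m = 9 := by omega
      subst this; norm_num
    · have := ih (by omega)
      have h2 : 8 * (m + 1) ^ 2 ≤ 2 * (8 * m ^ 2) := by nlinarith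
      calc 8 * (m + 1) ^ 2 ≤ 2 * (8 * m ^ 2) := h2
        _ < 2 * 2 ^ m := by omega
        _ = 2 ^ (m + 1) := by ring

theorem stmt13 (N : ℕ) (h : 5 ≤ N) :
    (N : ℝ) / (2 : ℝ) ^ (((N : ℝ) - 1) / 2) <
      1 / 2 + (2 : ℝ) ^ (-(N : ℝ) / 2) * Real.sqrt ((2 : ℝ) ^ ((N : ℝ) - 2) - N) ↔
    7 ≤ N := by
  rw [key13 N]
  set t : ℝ := (2:ℝ) ^ ((N:ℝ)/2) with htdef
  have htpos : 0 < t := Real.rpow_pos_of_pos (by norm_num) _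
  have ht2 : t ^ 2 = (2:ℝ) ^ N := by
    rw [htdef, ← Real.rpow_natCast ((2:ℝ)^((N:ℝ)/2)) 2, ← Real.rpow_mul (by norm_num),
      ← Real.rpow_natCast 2 N]
    norm_num
  have hs : Real.sqrt 2 ^ 2 = 2 := Real.sq_sqrt (by norm_num)
  have hsnn : (0:ℝ) ≤ Real.sqrt 2 := Real.sqrt_nonneg 2
  have hslb : (1.414:ℝ) < Real.sqrt 2 := by nlinarith
  have hsub : Real.sqrt 2 < 1.415 := by nlinarith
  constructor
  · intro hlt
    by_contra h7
    push_neg at h7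
    interval_cases N
    · -- N = 5
      norm_num at ht2 hlt
      rw [show t^2/4 - (5:ℝ) = 3 by rw [ht2]; norm_num] at hlt
      have h3 : Real.sqrt 3 < 1.74 := by
        nlinarith [Real.sq_sqrt (show (0:ℝ) ≤ 3 by norm_num), Real.sqrt_nonneg 3]
      have htub : t < 5.66 := by nlinarith
      nlinarith
    · -- N = 6
      norm_num at ht2 hlt
      rw [show t^2/4 - (6:ℝ) = 10 by rw [ht2]; norm_num] at hlt
      have h10 : Real.sqrt 10 < 3.17 := by
        nlinarith [Real.sq_sqrt (show (0:ℝ) ≤ 10 by norm_num), Real.sqrt_nonneg 10]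
      have htub : t < 8.01 := by nlinarith
      nlinarith
  · intro h7
    rcases Nat.lt_or_ge N 10 with h10 | h10
    · interval_cases N
      · -- N = 7
        norm_num at ht2 ⊢
        rw [show t^2/4 - (7:ℝ) = 25 by rw [ht2]; norm_num]
        rw [show (25:ℝ) = 5^2 by norm_num, Real.sqrt_sq (by norm_num)]
        have htlb : (11.3:ℝ) < t := by nlinarith
        nlinarith
      · -- N = 8
        norm_num at ht2 ⊢
        rw [show t^2/4 - (8:ℝ) = 56 by rw [ht2]; norm_num]
        have h56 : (7.4:ℝ) < Real.sqrt 56 := by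
          nlinarith [Real.sq_sqrt (show (0:ℝ) ≤ 56 by norm_num), Real.sqrt_nonneg 56]
        have htlb : (16:ℝ) ≤ t := by nlinarith
        nlinarith
      · -- N = 9
        norm_num at ht2 ⊢
        rw [show t^2/4 - (9:ℝ) = 119 by rw [ht2]; norm_num]
        have h119 : (10.9:ℝ) < Real.sqrt 119 := by
          nlinarith [Real.sq_sqrt (show (0:ℝ) ≤ 119 by norm_num), Real.sqrt_nonneg 119]
        have htlb : (22.6:ℝ) < t := by nlinarith
        nlinarith
    · -- N ≥ 10
      have hnat : 8 * N ^ 2 < 2 ^ N := nat_pow13 N h10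
      have hreal : 8 * (N:ℝ) ^ 2 < 2 ^ N := by exact_mod_cast hnat
      have hlt : (N:ℝ) * Real.sqrt 2 < t / 2 := by
        have h1 : ((N:ℝ) * Real.sqrt 2) ^ 2 < (t / 2) ^ 2 := by
          nlinarith
        have h2 : (0:ℝ) ≤ (N:ℝ) * Real.sqrt 2 := by positivity
        exact lt_of_pow_lt_pow_left₀ 2 (by positivity) h1
      have := Real.sqrt_nonneg (t^2/4 - (N:ℝ))
      linarith
end

section
/- For k ≥ 2 and N > 2k, the polygamous sum of squared violation factors strictly exceeds the GHZ value: 2^(−(N−k+1))·C(N,k)·A(N,k,⌈k/2⌉)² > 2^(N−k−1); for k = 2 this reduces to C(N,2)·(2^(N−1)/N)²·2^(−(N−1)) > 2^(N−3), i.e., (N−1)/(2N) · 2^(N−1) > 2^(N−3), equivalently 2(N−1) > N. -/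
open Finset

lemma choose_mono_right {m j t : ℕ} (hjt : j ≤ t) (ht : t ≤ m / 2) :
    m.choose j ≤ m.choose t := by
  induction hjt using Nat.decreasingInduction with
  | self => rfl
  | of_succ k hk ih =>
      exact (Nat.choose_le_succ_of_lt_half_left (lt_of_lt_of_le hk ht)).trans ih

lemma choose_strict {m r : ℕ} (h : 2 * (r + 1) ≤ m) :
    m.choose r < m.choose (r + 1) := by
  have h1 : m.choose (r+1) * (r+1) = m.choose r * (m - r) := Nat.choose_succ_right_eq m r
  have hr : r ≤ m := by omega
  have hpos : 0 < m.choose r := Nat.choose_pos hr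
  have : m.choose r * (r+1) < m.choose r * (m - r) :=
    mul_lt_mul_of_pos_left (by omega) hpos
  rw [← h1] at this
  exact Nat.lt_of_mul_lt_mul_right this

lemma key_nat_s16 (s t N : ℕ) (ht : 1 ≤ t) (hts : t ≤ s) (hN : 2 * (s + t) < N) :
    N.choose s * N.choose t < N.choose (s + t) * ((s + t).choose s) ^ 2 := by
  set m := N - s with hm
  have hNsm : N = s + m := by omega
  have hmt : 2 * t + 1 ≤ m := by omega
  -- Vandermonde for C(N, t)
  have hvdm : N.choose t = ∑ ij ∈ antidiagonal t, s.choose ij.1 * m.choose ij.2 := by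
    rw [hNsm]; exact Nat.add_choose_eq s m t
  -- strict bound: C(N,t) < (∑ C(s,i)) * C(m,t)
  have hsum : N.choose t < ∑ ij ∈ antidiagonal t, s.choose ij.1 * m.choose t := by
    rw [hvdm]
    apply Finset.sum_lt_sum
    · intro ij hij
      rw [Finset.HasAntidiagonal.mem_antidiagonal] at hij
      apply Nat.mul_le_mul_left
      exact choose_mono_right (by omega) (by omega)
    · refine ⟨(1, t - 1), ?_, ?_⟩
      · rw [Finset.HasAntidiagonal.mem_antidiagonal]; omega
      · have h1 : m.choose (t-1) < m.choose t := by
          have e : t - 1 + 1 = t := by omega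
          calc m.choose (t-1) < m.choose (t - 1 + 1) := choose_strict (by omega)
            _ = m.choose t := by rw [e]
        have h2 : 0 < s.choose (1, t-1).1 := by
          simp only [Nat.choose_one_right]; omega
        exact mul_lt_mul_of_pos_left h1 h2
  -- ∑ C(s,i) ≤ C(s+t, s)
  have hsum2 : ∑ ij ∈ antidiagonal t, s.choose ij.1 ≤ (s + t).choose s := by
    have : (s + t).choose s = (s + t).choose t := Nat.choose_symm_add
    rw [this, Nat.add_choose_eq s t t]
    apply Finset.sum_le_sum
    intro ij hij
    rw [Finset.HasAntidiagonal.mem_antidiagonal] at hij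
    have : 0 < t.choose ij.2 := Nat.choose_pos (by omega)
    nlinarith [Nat.zero_le (s.choose ij.1)]
  have hmain : N.choose t < (s + t).choose s * m.choose t := by
    calc N.choose t < ∑ ij ∈ antidiagonal t, s.choose ij.1 * m.choose t := hsum
      _ = (∑ ij ∈ antidiagonal t, s.choose ij.1) * m.choose t := by
          rw [Finset.sum_mul]
      _ ≤ (s + t).choose s * m.choose t := Nat.mul_le_mul_right _ hsum2
  -- identity C(N, s+t) * C(s+t, s) = C(N, s) * C(m, t)
  have hid : N.choose (s + t) * (s + t).choose s = N.choose s * m.choose t := by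
    have := Nat.choose_mul (n := N) (k := s + t) (s := s) (by omega)
    simpa [hm, Nat.add_sub_cancel_left] using this
  have hNs : 0 < N.choose s := Nat.choose_pos (by omega)
  calc N.choose s * N.choose t < N.choose s * ((s + t).choose s * m.choose t) := by
        exact mul_lt_mul_of_pos_left hmain hNs
    _ = (N.choose (s+t) * (s+t).choose s) * (s+t).choose s := by rw [hid]; ring
    _ = N.choose (s + t) * ((s + t).choose s) ^ 2 := by ring


/-- For k ≥ 2 and N > 2k, the polygamous sum of squared violation factors
strictly exceeds the GHZ value 2^(N−k−1). -/
theorem stmt16 (N k : ℕ) (hk : 2 ≤ k) (hN : 2 * k < N) :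
    (2 : ℝ) ^ (-((N : ℝ) - k + 1)) * (Nat.choose N k : ℝ) * (A N k ((k + 1) / 2)) ^ 2 >
      (2 : ℝ) ^ ((N : ℝ) - k - 1) := by
  set s := (k + 1) / 2 with hs
  set t := k - s with htdef
  have hst : s + t = k := by omega
  have ht1 : 1 ≤ t := by omega
  have hts : t ≤ s := by omega
  have hkey : N.choose s * N.choose t < N.choose k * (k.choose s) ^ 2 := by
    have := key_nat_s16 s t N ht1 hts (by omega)
    rwa [hst] at this
  -- real versions
  have hD : (0 : ℝ) < (N.choose s : ℝ) * (N.choose t : ℝ) := by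
    have h1 : 0 < N.choose s := Nat.choose_pos (by omega)
    have h2 : 0 < N.choose t := Nat.choose_pos (by omega)
    positivity
  have hkeyR : ((N.choose s : ℝ) * (N.choose t : ℝ)) < (N.choose k : ℝ) * (k.choose s : ℝ) ^ 2 := by
    exact_mod_cast hkey
  unfold A
  rw [div_pow, mul_pow, Real.sq_sqrt hD.le]
  have hcast : ((N - k : ℕ) : ℝ) = (N : ℝ) - k := by
    push_cast [Nat.cast_sub (by omega : k ≤ N)]; ring
  -- rewrite nat pow as rpow
  have hpow2 : ((2 : ℝ) ^ (N - k : ℕ)) ^ 2 = (2 : ℝ) ^ (2 * ((N : ℝ) - k)) := by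
    rw [← Real.rpow_natCast (2 : ℝ) (N - k), hcast, ← Real.rpow_natCast _ 2,
      ← Real.rpow_mul (by norm_num)]
    norm_num [mul_comm]
  have hexp : (2 : ℝ) ^ (-((N : ℝ) - k + 1)) * (2 : ℝ) ^ (2 * ((N : ℝ) - k)) =
      (2 : ℝ) ^ ((N : ℝ) - k - 1) := by
    rw [← Real.rpow_add (by norm_num)]
    ring_nf
  calc (2 : ℝ) ^ (-((N : ℝ) - k + 1)) * (N.choose k : ℝ) *
        (((2 : ℝ) ^ (N - k : ℕ)) ^ 2 * (k.choose s : ℝ) ^ 2 /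
          ((N.choose s : ℝ) * (N.choose t : ℝ)))
      = (2 : ℝ) ^ ((N : ℝ) - k - 1) *
        ((N.choose k : ℝ) * (k.choose s : ℝ) ^ 2 / ((N.choose s : ℝ) * (N.choose t : ℝ))) := by
        rw [hpow2, ← hexp]; ring
    _ > (2 : ℝ) ^ ((N : ℝ) - k - 1) * 1 := by
        apply mul_lt_mul_of_pos_left _ (Real.rpow_pos_of_pos (by norm_num) _)
        rw [lt_div_iff₀ hD, one_mul]
        exact hkeyR
    _ = (2 : ℝ) ^ ((N : ℝ) - k - 1) := mul_one _
end

section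
/- The symmetrized ladder operator identity on n qubits: sym[σ₋^⊗(n−k) ⊗ 1^⊗k] = k!·S₋^(n−k), where S₋ = ∑ᵢ σ₋^(i), sym denotes the sum over all n! permutation conjugations, and σ₋ is the 2×2 matrix with a single 1 in the (0,1) entry. -/
/-- The lowering operator σ₋ = |0⟩⟨1| acting on qubit `i` of `n` qubits
(identity on the remaining qubits). -/
noncomputable def sigmaMinusAt (n : ℕ) (i : Fin n) :
    Matrix (Fin n → Fin 2) (Fin n → Fin 2) ℂ :=
  fun x y => if x i = 0 ∧ y i = 1 ∧ ∀ j, j ≠ i → x j = y j then 1 else 0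

/-- The collective lowering operator S₋ = ∑ᵢ σ₋⁽ⁱ⁾. -/
noncomputable def Sminus (n : ℕ) : Matrix (Fin n → Fin 2) (Fin n → Fin 2) ℂ :=
  ∑ i, sigmaMinusAt n i

/-- The operator σ₋^⊗(n−k) ⊗ 1^⊗k : σ₋ on the first n−k qubits, identity on the rest. -/
noncomputable def sigmaMinusBlock (n k : ℕ) :
    Matrix (Fin n → Fin 2) (Fin n → Fin 2) ℂ :=
  fun x y =>
    if (∀ i : Fin n, (i : ℕ) < n - k → (x i = 0 ∧ y i = 1)) ∧
        (∀ i : Fin n, n - k ≤ (i : ℕ) → x i = y i) then 1 else 0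

/-- The symmetrization sym[O] = ∑_{P ∈ Sₙ} P O P†, where permutations act by
permuting the tensor factors. -/
noncomputable def symOp (n : ℕ) (O : Matrix (Fin n → Fin 2) (Fin n → Fin 2) ℂ) :
    Matrix (Fin n → Fin 2) (Fin n → Fin 2) ℂ :=
  fun x y => ∑ P : Equiv.Perm (Fin n), O (x ∘ P) (y ∘ P)


open Finset


section count
variable {α : Type*} [Fintype α] [DecidableEq α]

/-- Restriction of a permutation mapping S into T to an equiv S ≃ T. -/
def permRestrict (S T : Finset α) (Q : Equiv.Perm α) (hQ : ∀ i, i ∈ S ↔ Q i ∈ T) :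
    {a // a ∈ S} ≃ {a // a ∈ T} where
  toFun a := ⟨Q a, (hQ a).1 a.2⟩
  invFun b := ⟨Q.symm b, (hQ _).2 (by simpa using b.2)⟩
  left_inv a := by ext; simp
  right_inv b := by ext; simp

def permRestrictCompl (S T : Finset α) (Q : Equiv.Perm α) (hQ : ∀ i, i ∈ S ↔ Q i ∈ T) :
    {a // a ∉ S} ≃ {a // a ∉ T} where
  toFun a := ⟨Q a, fun h => a.2 ((hQ a).2 h)⟩
  invFun b := ⟨Q.symm b, fun h => b.2 (by simpa using (hQ _).1 h)⟩
  left_inv a := by ext; simp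
  right_inv b := by ext; simp

noncomputable def permSplit (S T : Finset α) :
    {Q : Equiv.Perm α // ∀ i, i ∈ S ↔ Q i ∈ T} ≃
      (({a // a ∈ S} ≃ {a // a ∈ T}) × ({a // a ∉ S} ≃ {a // a ∉ T})) where
  toFun Q := (permRestrict S T Q.1 Q.2, permRestrictCompl S T Q.1 Q.2)
  invFun e := ⟨(Equiv.sumCompl (· ∈ S)).symm.trans
      ((e.1.sumCongr e.2).trans (Equiv.sumCompl (· ∈ T))), by
    intro i
    by_cases hi : i ∈ S
    · simp [Equiv.sumCompl_symm_apply_of_pos hi, hi, (e.1 ⟨i, hi⟩).2]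
    · simp [Equiv.sumCompl_symm_apply_of_neg hi, hi, (e.2 ⟨i, hi⟩).2]⟩
  left_inv Q := by
    ext i
    by_cases hi : i ∈ S
    · simp [Equiv.sumCompl_symm_apply_of_pos hi, permRestrict]
    · simp [Equiv.sumCompl_symm_apply_of_neg hi, permRestrictCompl]
  right_inv e := by
    refine Prod.ext ?_ ?_ <;> · ext a; simp [permRestrict, permRestrictCompl,
      Equiv.sumCompl_symm_apply_of_pos, Equiv.sumCompl_symm_apply_of_neg, a.2]

theorem card_perm_maps (S T : Finset α) (hST : S.card = T.card) :
    Fintype.card {Q : Equiv.Perm α // ∀ i, i ∈ S ↔ Q i ∈ T} =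
      S.card.factorial * (Fintype.card α - S.card).factorial := by
  rw [Fintype.card_congr (permSplit S T), Fintype.card_prod]
  have h1 : Fintype.card {a // a ∈ S} = S.card := Fintype.card_coe S
  have h2 : Fintype.card {a // a ∈ T} = T.card := Fintype.card_coe T
  have e1 : {a // a ∈ S} ≃ {a // a ∈ T} := Fintype.equivOfCardEq (by rw [h1, h2, hST])
  have h3 : Fintype.card {a // a ∉ S} = Fintype.card α - S.card := by
    rw [Fintype.card_subtype_compl, h1]
  have h4 : Fintype.card {a // a ∉ T} = Fintype.card α - T.card := by
    rw [Fintype.card_subtype_compl, h2]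
  have e2 : {a // a ∉ S} ≃ {a // a ∉ T} := Fintype.equivOfCardEq (by rw [h3, h4, hST])
  rw [Fintype.card_equiv e1, Fintype.card_equiv e2, h1, h3]

end count

lemma card_filter_lt (n m : ℕ) (hm : m ≤ n) :
    ((univ : Finset (Fin n)).filter (fun i : Fin n => (i : ℕ) < m)).card = m := by
  have : (univ : Finset (Fin n)).filter (fun i : Fin n => (i : ℕ) < m) =
      (univ : Finset (Fin m)).map (Fin.castLEEmb hm) := by
    ext j
    simp only [Finset.mem_filter, Finset.mem_univ, true_and, Finset.mem_map]
    constructor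
    · intro hj; exact ⟨⟨j, hj⟩, rfl⟩
    · rintro ⟨a, rfl⟩
      simpa using a.2
  rw [this, Finset.card_map, Finset.card_univ, Fintype.card_fin]

def goodPair {n : ℕ} (x y : Fin n → Fin 2) : Prop :=
  ∀ j, x j = y j ∨ (x j = 0 ∧ y j = 1)

instance {n : ℕ} (x y : Fin n → Fin 2) : Decidable (goodPair x y) := by
  unfold goodPair; infer_instance

def diffSet {n : ℕ} (x y : Fin n → Fin 2) : Finset (Fin n) :=
  Finset.univ.filter (fun j => x j ≠ y j)

lemma mem_diffSet {n : ℕ} {x y : Fin n → Fin 2} {j : Fin n} :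
    j ∈ diffSet x y ↔ x j ≠ y j := by simp [diffSet]

lemma Spow_apply (n m : ℕ) (x y : Fin n → Fin 2) :
    (Sminus n ^ m) x y =
      if goodPair x y ∧ (diffSet x y).card = m then (m.factorial : ℂ) else 0 := by
  induction m generalizing x with
  | zero =>
    have hiff : (goodPair x y ∧ (diffSet x y).card = 0) ↔ x = y := by
      constructor
      · rintro ⟨hg, hc⟩
        funext j
        by_contra hj
        have hmem : j ∈ diffSet x y := mem_diffSet.2 hj
        rw [Finset.card_eq_zero.mp hc] at hmem
        exact absurd hmem (Finset.notMem_empty j)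
      · rintro rfl
        exact ⟨fun j => Or.inl rfl, by simp [diffSet]⟩
    rw [pow_zero, Matrix.one_apply, if_congr hiff.symm rfl rfl]
    simp
  | succ m ih =>
    rw [pow_succ', Matrix.mul_apply]
    have hS : ∀ z, Sminus n x z = ∑ i, sigmaMinusAt n i x z := by
      intro z
      simp [Sminus, Matrix.sum_apply]
    simp only [hS, Finset.sum_mul]
    rw [Finset.sum_comm]
    have hterm : ∀ i : Fin n,
        (∑ z : Fin n → Fin 2, sigmaMinusAt n i x z * (Sminus n ^ m) z y) =
        if x i = 0 then (Sminus n ^ m) (Function.update x i 1) y else 0 := by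
      intro i
      by_cases hx : x i = 0
      · rw [Finset.sum_eq_single (Function.update x i 1)]
        · have hcond : x i = 0 ∧ Function.update x i 1 i = 1 ∧
              ∀ j, j ≠ i → x j = Function.update x i 1 j := by
            refine ⟨hx, Function.update_self .., fun j hj => ?_⟩
            rw [Function.update_of_ne hj]
          rw [sigmaMinusAt, if_pos hcond, if_pos hx, one_mul]
        · intro z _ hz
          rw [sigmaMinusAt, if_neg, zero_mul]
          rintro ⟨h1, h2, h3⟩
          apply hz
          funext j
          by_cases hj : j = i
          · subst hj; rw [h2, Function.update_self]
          · rw [Function.update_of_ne hj, ← h3 j hj]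
        · intro hmem; exact absurd (Finset.mem_univ _) hmem
      · rw [if_neg hx]
        apply Finset.sum_eq_zero
        intro z _
        rw [sigmaMinusAt, if_neg, zero_mul]
        rintro ⟨h1, _, _⟩; exact hx h1
    simp only [hterm]
    simp only [ih]
    have hupd : ∀ i : Fin n, x i = 0 → y i = 1 →
        diffSet (Function.update x i 1) y = (diffSet x y).erase i := by
      intro i hx hy
      ext j
      by_cases hj : j = i
      · subst hj
        simp [mem_diffSet, Function.update_self, hy]
      · simp [mem_diffSet, Function.update_of_ne hj, hj]
    have hcomb : ∀ i : Fin n,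
        (if x i = 0 then
          (if goodPair (Function.update x i 1) y ∧
              (diffSet (Function.update x i 1) y).card = m then ((m.factorial : ℂ)) else 0)
          else 0) =
        if (goodPair x y ∧ (diffSet x y).card = m + 1) ∧ i ∈ diffSet x y
          then (m.factorial : ℂ) else 0 := by
      intro i
      rw [← ite_and]
      refine if_congr ?_ rfl rfl
      constructor
      · rintro ⟨hx0, hg, hc⟩
        have hy1 : y i = 1 := by
          rcases hg i with h | h
          · rw [← h, Function.update_self]
          · rw [Function.update_self] at h
            exact absurd h.1 (by decide)
        have hiD : i ∈ diffSet x y := mem_diffSet.2 (by rw [hx0, hy1]; decide)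
        have hgxy : goodPair x y := by
          intro j
          by_cases hj : j = i
          · subst hj; exact Or.inr ⟨hx0, hy1⟩
          · have := hg j
            rwa [Function.update_of_ne hj] at this
        refine ⟨⟨hgxy, ?_⟩, hiD⟩
        rw [hupd i hx0 hy1] at hc
        have := Finset.card_erase_of_mem hiD
        have hpos := Finset.card_pos.mpr ⟨i, hiD⟩
        omega
      · rintro ⟨⟨hg, hc⟩, hiD⟩
        have hne := mem_diffSet.1 hiD
        rcases hg i with h | h
        · exact absurd h hne
        refine ⟨h.1, ?_, ?_⟩
        · intro j
          by_cases hj : j = i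
          · subst hj
            rw [Function.update_self, h.2]
            exact Or.inl rfl
          · rw [Function.update_of_ne hj]
            exact hg j
        · rw [hupd i h.1 h.2, Finset.card_erase_of_mem hiD, hc]
          omega
    simp only [hcomb]
    by_cases hP : goodPair x y ∧ (diffSet x y).card = m + 1
    · simp only [hP, true_and]
      rw [Finset.sum_ite_mem, Finset.univ_inter, Finset.sum_const, hP.2,
        Nat.factorial_succ]
      push_cast
      ring
    · simp [hP]

lemma symBlock_apply (n k : ℕ) (hk : k ≤ n) (x y : Fin n → Fin 2) :
    symOp n (sigmaMinusBlock n k) x y =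
      if goodPair x y ∧ (diffSet x y).card = n - k
        then (((n - k).factorial * k.factorial : ℕ) : ℂ) else 0 := by
  classical
  simp only [symOp, sigmaMinusBlock, Function.comp_apply]
  set m := n - k with hm
  by_cases hP : goodPair x y ∧ (diffSet x y).card = m
  · obtain ⟨hg, hc⟩ := hP
    have hCiff : ∀ P : Equiv.Perm (Fin n),
        ((∀ i : Fin n, (i : ℕ) < m → (x (P i) = 0 ∧ y (P i) = 1)) ∧
          (∀ i : Fin n, m ≤ (i : ℕ) → x (P i) = y (P i))) ↔
        (∀ i : Fin n, i ∈ (univ : Finset (Fin n)).filter (fun i : Fin n => (i : ℕ) < m)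
          ↔ P i ∈ diffSet x y) := by
      intro P
      constructor
      · rintro ⟨h1, h2⟩ i
        simp only [Finset.mem_filter, Finset.mem_univ, true_and, mem_diffSet]
        constructor
        · intro hi
          obtain ⟨hx0, hy1⟩ := h1 i hi
          rw [hx0, hy1]; decide
        · intro hne
          by_contra hlt
          exact hne (h2 i (le_of_not_gt hlt))
      · intro hiff
        constructor
        · intro i hi
          have hmem : P i ∈ diffSet x y := (hiff i).1 (by simp [hi])
          rcases hg (P i) with h | h
          · exact absurd h (mem_diffSet.1 hmem)
          · exact h
        · intro i hi
          have : P i ∉ diffSet x y := fun hmem => by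
            have := (hiff i).2 hmem
            simp only [Finset.mem_filter, Finset.mem_univ, true_and] at this
            omega
          exact not_not.mp (fun hne => this (mem_diffSet.2 hne))
    rw [if_pos ⟨hg, hc⟩]
    calc (∑ P : Equiv.Perm (Fin n),
            if (∀ i : Fin n, (i : ℕ) < m → (x (P i) = 0 ∧ y (P i) = 1)) ∧
              (∀ i : Fin n, m ≤ (i : ℕ) → x (P i) = y (P i)) then (1 : ℂ) else 0)
        = ∑ P : Equiv.Perm (Fin n),
            if (∀ i : Fin n, i ∈ (univ : Finset (Fin n)).filter (fun i : Fin n => (i : ℕ) < m)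
              ↔ P i ∈ diffSet x y) then (1 : ℂ) else 0 := by
          exact Finset.sum_congr rfl fun P _ => if_congr (hCiff P) rfl rfl
      _ = (((univ : Finset (Equiv.Perm (Fin n))).filter (fun P =>
            ∀ i : Fin n, i ∈ (univ : Finset (Fin n)).filter (fun i : Fin n => (i : ℕ) < m)
              ↔ P i ∈ diffSet x y)).card : ℂ) := by
          rw [Finset.sum_boole]
      _ = ((m.factorial * k.factorial : ℕ) : ℂ) := by
          norm_cast
          rw [← Fintype.card_subtype]
          have h1 := card_perm_maps ((univ : Finset (Fin n)).filter
              (fun i : Fin n => (i : ℕ) < m)) (diffSet x y)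
            (by rw [card_filter_lt n m (by omega), hc])
          rw [card_filter_lt n m (by omega), Fintype.card_fin,
            show n - m = k by omega] at h1
          convert h1 using 2
  · rw [if_neg hP]
    apply Finset.sum_eq_zero
    intro P _
    rw [if_neg]
    rintro ⟨h1, h2⟩
    apply hP
    have hg : goodPair x y := by
      intro j
      rcases lt_or_ge ((P.symm j : Fin n) : ℕ) m with hj | hj
      · have := h1 (P.symm j) hj
        rw [Equiv.apply_symm_apply] at this
        exact Or.inr this
      · have := h2 (P.symm j) hj
        rw [Equiv.apply_symm_apply] at this
        exact Or.inl this
    refine ⟨hg, ?_⟩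
    have hDeq : diffSet x y =
        ((univ : Finset (Fin n)).filter (fun i : Fin n => (i : ℕ) < m)).image P := by
      ext j
      simp only [Finset.mem_image, Finset.mem_filter, Finset.mem_univ, true_and,
        mem_diffSet]
      constructor
      · intro hne
        refine ⟨P.symm j, ?_, Equiv.apply_symm_apply _ _⟩
        by_contra hlt
        have := h2 (P.symm j) (le_of_not_gt hlt)
        rw [Equiv.apply_symm_apply] at this
        exact hne this
      · rintro ⟨i, hi, rfl⟩
        obtain ⟨hx0, hy1⟩ := h1 i hi
        rw [hx0, hy1]; decide
    rw [hDeq, Finset.card_image_of_injective _ P.injective,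
      card_filter_lt n m (by omega)]


/-- sym[σ₋^⊗(n−k) ⊗ 1^⊗k] = k! · S₋^(n−k). -/
theorem stmt17 (n k : ℕ) (h : k < n) :
    symOp n (sigmaMinusBlock n k) = (Nat.factorial k : ℂ) • (Sminus n) ^ (n - k) := by
  ext x y
  rw [Matrix.smul_apply, Spow_apply, symBlock_apply n k h.le]
  by_cases hP : goodPair x y ∧ (diffSet x y).card = n - k
  · rw [if_pos hP, if_pos hP, smul_eq_mul]
    push_cast
    ring
  · rw [if_neg hP, if_neg hP, smul_eq_mul, mul_zero]
end
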